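/- For all integers d, r, k with 0 ≤ k ≤ d, the symmetry qbase(k, -q[r,x]_q, d)_{1/q} = (-1)^d q^{C(d+1,2)} qbase(r-1+d-k, x, d)_q holds, where the left side is obtained by substituting the polynomial -q([r]_q + q^r x) for the variable and replacing q by 1/q in all coefficients. -/

import Mathlib

open Polynomial Finset

noncomputable section

/-- The field ℚ(q) of rational functions. -/
abbrev K : Type := RatFunc ℚ

/-- The variable q of ℚ(q). -/
def qq : K := RatFunc.X

/-- The q-integer [n]_t = (t^n - 1)/(t - 1), for n ∈ ℤ. -/
def qint (t : K) (n : ℤ) : K := (t ^ n - 1) / (t - 1)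

/-- The q-factorial [n]!_t. -/
def qfact (t : K) (n : ℕ) : K := ∏ i ∈ range n, qint t (i + 1)

/-- The generalized q-binomial qbinom(m, n)_t = [m]_t [m-1]_t ⋯ [m-n+1]_t / [n]!_t. -/
def qbinom (t : K) (m : ℤ) (n : ℕ) : K := (∏ i ∈ range n, qint t (m - i)) / qfact t n

/-- The q-binomial with the vanishing convention: 0 unless 0 ≤ n ≤ m. -/
def qbinomv (t : K) (m n : ℤ) : K :=
  if 0 ≤ n ∧ n ≤ m then (∏ i ∈ range n.toNat, qint t (m - i)) / qfact t n.toNat else 0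

/-- The polynomial [n, x]_t = [n]_t + t^n x. -/
def qb (t : K) (n : ℤ) : Polynomial K := C (qint t n) + C (t ^ n) * X

/-- The polynomial qbase(m, x, n)_t = [m-n+1,x]_t ⋯ [m,x]_t / [n]!_t. -/
def qbase (t : K) (m : ℤ) (n : ℕ) : Polynomial K :=
  (∏ i ∈ range n, qb t (m - n + 1 + i)) * C (qfact t n)⁻¹


lemma hq0 : qq ≠ 0 := RatFunc.X_ne_zero

lemma hq1 : qq - 1 ≠ 0 := by
  rw [sub_ne_zero]
  intro h
  have h2 : (Polynomial.X : Polynomial ℚ) = 1 :=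
    IsFractionRing.injective (Polynomial ℚ) K (by simpa [RatFunc.algebraMap_X, qq] using h)
  simpa [Polynomial.coeff_one] using congrArg (Polynomial.coeff · 1) h2

lemma hqi1 : qq⁻¹ - 1 ≠ 0 := by
  intro h
  apply hq1
  rw [sub_eq_zero] at h ⊢
  rw [← inv_inv qq, h, inv_one]

lemma qint_inv (n : ℤ) : qint qq⁻¹ n = qq ^ (1 - n) * qint qq n := by
  unfold qint
  have h0 := hq0
  have h1 := hq1
  have hi := hqi1
  have hn : qq ^ n ≠ 0 := zpow_ne_zero n h0
  rw [inv_zpow, zpow_sub₀ h0, zpow_one, mul_div_assoc', div_eq_div_iff hi h1]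
  field_simp
  ring

lemma qint_sub (r j : ℤ) : qint qq r - qint qq j = qq ^ j * qint qq (r - j) := by
  unfold qint
  have h1 := hq1
  have hj : qq ^ j ≠ 0 := zpow_ne_zero j hq0
  rw [zpow_sub₀ hq0]
  field_simp
  ring

lemma qb_comp (r j : ℤ) : (qb qq⁻¹ j).comp (-(C qq) * qb qq r) = -(C qq) * qb qq (r - j) := by
  unfold qb
  simp only [add_comp, C_comp, mul_comp, X_comp]
  rw [qint_inv, inv_zpow]
  have hj : qq ^ j ≠ 0 := zpow_ne_zero j hq0
  have hinv : (qq ^ j)⁻¹ * qq ^ j = 1 := inv_mul_cancel₀ hj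
  have h1j : qq ^ (1 - j) = qq * (qq ^ j)⁻¹ := by
    rw [zpow_sub₀ hq0, zpow_one, div_eq_mul_inv]
  have hc1 : -((qq ^ j)⁻¹ * (qq * qq ^ r)) = -(qq * qq ^ (r - j)) := by
    rw [zpow_sub₀ hq0, div_eq_mul_inv]; ring
  have hc0 : qq ^ (1 - j) * qint qq j - (qq ^ j)⁻¹ * (qq * qint qq r) =
      -(qq * qint qq (r - j)) := by
    rw [h1j]
    linear_combination (-(qq * (qq ^ j)⁻¹)) * qint_sub r j - (qq * qint qq (r - j)) * hinv
  have L : C (qq ^ (1 - j) * qint qq j) +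
      C ((qq ^ j)⁻¹) * (-(C qq) * (C (qint qq r) + C (qq ^ r) * X)) =
      C (qq ^ (1 - j) * qint qq j - (qq ^ j)⁻¹ * (qq * qint qq r)) +
        C (-((qq ^ j)⁻¹ * (qq * qq ^ r))) * X := by
    simp only [map_sub, map_mul, map_neg]; ring
  have R : -(C qq) * (C (qint qq (r - j)) + C (qq ^ (r - j)) * X) =
      C (-(qq * qint qq (r - j))) + C (-(qq * qq ^ (r - j))) * X := by
    simp only [map_mul, map_neg]; ring
  rw [L, R, hc0, hc1]

lemma qfact_inv (d : ℕ) : qfact qq⁻¹ d = (qq ^ (d.choose 2))⁻¹ * qfact qq d := by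
  unfold qfact
  rw [Finset.prod_congr rfl (fun (i : ℕ) _ => qint_inv ((i : ℤ) + 1)), Finset.prod_mul_distrib]
  congr 1
  have : ∀ i ∈ range d, qq ^ ((1 : ℤ) - (i + 1)) = ((qq ^ i)⁻¹ : K) := by
    intro i _
    rw [show (1 : ℤ) - (i + 1) = -(i : ℤ) by ring, zpow_neg, zpow_natCast]
  rw [Finset.prod_congr rfl this, Finset.prod_inv_distrib, Finset.prod_pow_eq_pow_sum]
  congr 2
  rw [Finset.sum_range_id, Nat.choose_two_right]

lemma qfact_inv' (d : ℕ) : (qfact qq⁻¹ d)⁻¹ = qq ^ (d.choose 2) * (qfact qq d)⁻¹ := by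
  rw [qfact_inv, mul_inv, inv_inv]

theorem qbase_symmetry (d : ℕ) (r k : ℤ) (hk : 0 ≤ k) (hkd : k ≤ d) :
    (qbase qq⁻¹ k d).comp (-(C qq) * qb qq r) =
      (-1) ^ d * C (qq ^ ((d + 1).choose 2)) * qbase qq (r - 1 + d - k) d := by
  unfold qbase
  rw [mul_comp, C_comp, Polynomial.prod_comp]
  rw [Finset.prod_congr rfl (fun (i : ℕ) _ => qb_comp r (k - d + 1 + (i : ℤ)))]
  rw [Finset.prod_mul_distrib, Finset.prod_const]
  have lhsprod : ∏ i ∈ range d, qb qq (r - (k - d + 1 + i)) =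
      ∏ i ∈ range d, qb qq (r - k + i) := by
    rw [← Finset.prod_range_reflect (fun i => qb qq (r - k + i)) d]
    apply Finset.prod_congr rfl
    intro i hi
    have hid : i < d := mem_range.mp hi
    have h2 : ((d - 1 - i : ℕ) : ℤ) = (d : ℤ) - 1 - i := by omega
    simp only [h2]
    congr 1
    ring
  have rhsprod : ∏ i ∈ range d, qb qq (r - 1 + d - k - d + 1 + i) =
      ∏ i ∈ range d, qb qq (r - k + i) := by
    apply Finset.prod_congr rfl
    intro i _
    congr 1
    ring
  rw [lhsprod, rhsprod, qfact_inv']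
  rw [Finset.card_range, neg_pow, map_pow]
  have hch : (d + 1).choose 2 = d + d.choose 2 := by
    rw [Nat.choose_succ_succ, Nat.choose_one_right]
  rw [hch, pow_add, map_mul, map_pow]
  ring


end
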